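/- Let D ⊂ ℝ³ be a bounded measurable set, y ∉ closure(D), and let Φ_p^j(x,y), j=1,2,3, be the columns of the p-part of the elastic fundamental tensor. Then there exist constants C > 0 and C' ≥ 0 such that Σ_{j=1}^{3} ‖∇Φ_p^j(·,y)‖²_{L²(D)} ≥ C ∫_D |x-y|⁻⁸ dx − C' ∫_D |x-y|⁻⁶ dx. -/

import Mathlib

open Complex MeasureTheory Metric

open Real

noncomputable section

abbrev E3 := EuclideanSpace ℝ (Fin 3)

/-- Partial derivative in the `l`-th coordinate direction. -/
def pd (l : Fin 3) (f : E3 → ℂ) (x : E3) : ℂ :=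
  fderiv ℝ f x (EuclideanSpace.single l 1)

/-- The fundamental solution of the Helmholtz equation in `ℝ³`. -/
def helmG (κ : ℝ) (y : E3) (x : E3) : ℂ :=
  Complex.exp (Complex.I * κ * ‖x - y‖) / (4 * Real.pi * ‖x - y‖)


def Φ₀ (κ : ℝ) (r : ℝ) : ℂ := cexp (I * κ * r) / (4 * Real.pi * r)
def Φ₁ (κ : ℝ) (r : ℝ) : ℂ := cexp (I * κ * r) * (I * κ * r - 1) / (8 * Real.pi * r ^ 3)
def Φ₂ (κ : ℝ) (r : ℝ) : ℂ := cexp (I * κ * r) * (3 - 3 * I * κ * r - κ ^ 2 * r ^ 2) / (16 * Real.pi * r ^ 5)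
def Φ₃ (κ : ℝ) (r : ℝ) : ℂ :=
  cexp (I * κ * r) * (-15 + 15 * I * κ * r + 6 * κ ^ 2 * r ^ 2 - I * κ ^ 3 * r ^ 3) / (32 * Real.pi * r ^ 7)

lemma hasDerivAt_ofReal (r : ℝ) : HasDerivAt (fun s : ℝ => (s : ℂ)) 1 r := by
  simpa using (hasDerivAt_id r).ofReal_comp

lemma hexp (κ : ℝ) (r : ℝ) :
    HasDerivAt (fun s : ℝ => cexp (I * κ * s)) (cexp (I * κ * r) * (I * κ)) r := by
  have h : HasDerivAt (fun s : ℝ => I * κ * (s : ℂ)) (I * κ) r := by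
    simpa using (hasDerivAt_ofReal r).const_mul (I * κ)
  simpa using h.cexp

lemma pi_neC : (Real.pi : ℂ) ≠ 0 := by exact_mod_cast Real.pi_ne_zero

lemma hasDerivAt_ofReal_pow (n : ℕ) (r : ℝ) :
    HasDerivAt (fun s : ℝ => (s : ℂ) ^ n) ((n : ℂ) * (r:ℂ) ^ (n - 1)) r := by
  simpa [Complex.ofReal_pow] using ((hasDerivAt_id r).pow n).ofReal_comp

lemma hD0 (κ : ℝ) {r : ℝ} (hr : r ≠ 0) : HasDerivAt (Φ₀ κ) (Φ₁ κ r * (2 * r)) r := by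
  have hrC : (r : ℂ) ≠ 0 := Complex.ofReal_ne_zero.mpr hr
  have hden : HasDerivAt (fun s : ℝ => (4 * Real.pi * (s:ℂ))) (4 * Real.pi) r := by
    simpa using (hasDerivAt_ofReal r).const_mul (4 * (Real.pi : ℂ))
  have hne : (4 * Real.pi * (r:ℂ)) ≠ 0 := by simp [pi_neC, hrC, Real.pi_ne_zero]
  have h := (hexp κ r).div hden hne
  refine h.congr_deriv ?_
  rw [Φ₁]
  rw [div_mul_eq_mul_div, div_eq_div_iff (by simp [pi_neC, hrC, Real.pi_ne_zero]) (by simp [pi_neC, hrC, Real.pi_ne_zero])]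
  ring

lemma hD1 (κ : ℝ) {r : ℝ} (hr : r ≠ 0) : HasDerivAt (Φ₁ κ) (Φ₂ κ r * (2 * r)) r := by
  have hrC : (r : ℂ) ≠ 0 := Complex.ofReal_ne_zero.mpr hr
  have hlin : HasDerivAt (fun s : ℝ => (I * κ * (s:ℂ) - 1)) (I * κ) r := by
    simpa using ((hasDerivAt_ofReal r).const_mul (I * κ)).sub_const 1
  have hnum := (hexp κ r).mul hlin
  have hden : HasDerivAt (fun s : ℝ => (8 * Real.pi * (s:ℂ) ^ 3)) (8 * (Real.pi:ℂ) * (3 * (r:ℂ) ^ 2)) r := by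
    have := (hasDerivAt_ofReal_pow 3 r).const_mul (8 * (Real.pi : ℂ))
    norm_num at this ⊢
    convert this using 1 <;> ring
  have hne : (8 * Real.pi * (r:ℂ) ^ 3) ≠ 0 := by simp [pi_neC, hrC, Real.pi_ne_zero]
  have h := hnum.div hden hne
  refine h.congr_deriv ?_
  simp only [Pi.mul_apply]
  rw [Φ₂]
  rw [div_mul_eq_mul_div, div_eq_div_iff (by simp [pi_neC, hrC, Real.pi_ne_zero]) (by simp [pi_neC, hrC, Real.pi_ne_zero])]
  ring_nf
  rw [Complex.I_sq]
  ring

lemma hD2 (κ : ℝ) {r : ℝ} (hr : r ≠ 0) : HasDerivAt (Φ₂ κ) (Φ₃ κ r * (2 * r)) r := by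
  have hrC : (r : ℂ) ≠ 0 := Complex.ofReal_ne_zero.mpr hr
  have hpoly : HasDerivAt (fun s : ℝ => (3 - 3 * I * κ * (s:ℂ) - κ ^ 2 * (s:ℂ) ^ 2))
      (-(3 * I * κ) - (κ:ℂ) ^ 2 * (2 * (r:ℂ))) r := by
    have h1 : HasDerivAt (fun s : ℝ => (3 : ℂ) - 3 * I * κ * (s:ℂ)) (-(3 * I * κ)) r := by
      simpa using ((hasDerivAt_ofReal r).const_mul (3 * I * κ)).const_sub 3
    have h2 : HasDerivAt (fun s : ℝ => ((κ:ℂ) ^ 2 * (s:ℂ) ^ 2)) ((κ:ℂ) ^ 2 * (2 * (r:ℂ))) r := by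
      have := (hasDerivAt_ofReal_pow 2 r).const_mul ((κ:ℂ) ^ 2)
      norm_num at this ⊢
      convert this using 1 <;> ring
    exact h1.sub h2
  have hnum := (hexp κ r).mul hpoly
  have hden : HasDerivAt (fun s : ℝ => (16 * Real.pi * (s:ℂ) ^ 5)) (16 * (Real.pi:ℂ) * (5 * (r:ℂ) ^ 4)) r := by
    have := (hasDerivAt_ofReal_pow 5 r).const_mul (16 * (Real.pi : ℂ))
    norm_num at this ⊢
    convert this using 1 <;> ring
  have hne : (16 * Real.pi * (r:ℂ) ^ 5) ≠ 0 := by simp [pi_neC, hrC, Real.pi_ne_zero]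
  have h := hnum.div hden hne
  refine h.congr_deriv ?_
  simp only [Pi.mul_apply]
  rw [Φ₃]
  rw [div_mul_eq_mul_div, div_eq_div_iff (by simp [pi_neC, hrC, Real.pi_ne_zero]) (by simp [pi_neC, hrC, Real.pi_ne_zero])]
  ring_nf
  rw [Complex.I_sq]
  ring

def f0 (κ : ℝ) (t : ℝ) : ℂ := Φ₀ κ (Real.sqrt t)
def f1 (κ : ℝ) (t : ℝ) : ℂ := Φ₁ κ (Real.sqrt t)
def f2 (κ : ℝ) (t : ℝ) : ℂ := Φ₂ κ (Real.sqrt t)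
def f3 (κ : ℝ) (t : ℝ) : ℂ := Φ₃ κ (Real.sqrt t)

lemma chain_aux {κ t : ℝ} (ht : 0 < t) (Φa Φb : ℝ → ℝ → ℂ)
    (hD : ∀ {r : ℝ}, r ≠ 0 → HasDerivAt (Φa κ) (Φb κ r * (2 * r)) r) :
    HasDerivAt (fun s => Φa κ (Real.sqrt s)) (Φb κ (Real.sqrt t)) t := by
  have hst : Real.sqrt t ≠ 0 := by positivity
  have hs := Real.hasDerivAt_sqrt (ne_of_gt ht)
  have h := HasDerivAt.scomp (𝕜 := ℝ) (𝕜' := ℝ) (F := ℂ) t (hD hst) hs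
  refine h.congr_deriv ?_
  rw [Complex.real_smul]
  have : ((1 / (2 * Real.sqrt t) : ℝ) : ℂ) = 1 / (2 * (Real.sqrt t : ℂ)) := by push_cast; ring
  rw [this]
  have hstC : ((Real.sqrt t : ℝ) : ℂ) ≠ 0 := Complex.ofReal_ne_zero.mpr hst
  field_simp

lemma hf0 {κ t : ℝ} (ht : 0 < t) : HasDerivAt (f0 κ) (f1 κ t) t :=
  chain_aux ht Φ₀ Φ₁ (fun hr => hD0 κ hr)
lemma hf1 {κ t : ℝ} (ht : 0 < t) : HasDerivAt (f1 κ) (f2 κ t) t :=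
  chain_aux ht Φ₁ Φ₂ (fun hr => hD1 κ hr)
lemma hf2 {κ t : ℝ} (ht : 0 < t) : HasDerivAt (f2 κ) (f3 κ t) t :=
  chain_aux ht Φ₂ Φ₃ (fun hr => hD2 κ hr)

def qf (y : E3) (x : E3) : ℝ := ∑ i, (x i - y i) ^ 2

def Lq (y x : E3) : E3 →L[ℝ] ℝ := ∑ i, (2 * (x i - y i)) • (EuclideanSpace.proj (𝕜 := ℝ) i)

lemma hasFDerivAt_qf (y x : E3) : HasFDerivAt (qf y) (Lq y x) x := by
  have h : ∀ i : Fin 3, HasFDerivAt (fun x : E3 => (x i - y i) ^ 2)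
      ((2 * (x i - y i)) • (EuclideanSpace.proj (𝕜 := ℝ) i)) x := by
    intro i
    have h1 : HasFDerivAt (fun x : E3 => x i - y i) (EuclideanSpace.proj (𝕜 := ℝ) i) x :=
      (EuclideanSpace.proj (𝕜 := ℝ) i).hasFDerivAt.sub_const (y i)
    have h2 := h1.mul h1
    have h3 : (x i - y i) • (EuclideanSpace.proj (𝕜 := ℝ) i) + (x i - y i) • (EuclideanSpace.proj (𝕜 := ℝ) i)
        = (2 * (x i - y i)) • (EuclideanSpace.proj (𝕜 := ℝ) i) := by
      rw [← add_smul]; ring_nf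
    rw [h3] at h2
    have e : (fun x : E3 => (x i - y i)^2) = (fun x : E3 => x i - y i) * (fun x : E3 => x i - y i) := by
      funext z; simp [sq]
    rw [e]; exact h2
  exact HasFDerivAt.fun_sum (fun i _ => h i)

lemma Lq_apply (y x : E3) (m : Fin 3) :
    Lq y x (EuclideanSpace.single m 1) = 2 * (x m - y m) := by
  simp [Lq, ContinuousLinearMap.sum_apply, EuclideanSpace.single_apply]

lemma norm_eq_sqrt_qf (y x : E3) : ‖x - y‖ = Real.sqrt (qf y x) := by
  rw [EuclideanSpace.norm_eq, qf]
  congr 1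
  refine Finset.sum_congr rfl fun i _ => ?_
  have : (x - y) i = x i - y i := rfl
  rw [this, Real.norm_eq_abs, _root_.sq_abs]

lemma qf_pos {y x : E3} (hxy : x ≠ y) : 0 < qf y x := by
  have h1 : (0:ℝ) < ‖x - y‖ := by
    rw [norm_pos_iff]; exact sub_ne_zero.mpr hxy
  rw [norm_eq_sqrt_qf] at h1
  exact Real.sqrt_pos.mp h1

lemma helmG_eq (κ : ℝ) (y x : E3) : helmG κ y x = f0 κ (qf y x) := by
  rw [helmG, f0, Φ₀, norm_eq_sqrt_qf]

/-- Kronecker delta as a complex number. -/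
def dlt (j l : Fin 3) : ℂ := if j = l then 1 else 0

def Af (y : E3) (j : Fin 3) (x : E3) : ℂ := ((2 * (x j - y j) : ℝ) : ℂ)

def CA (j : Fin 3) : E3 →L[ℝ] ℂ :=
  Complex.ofRealCLM.comp ((2:ℝ) • (EuclideanSpace.proj (𝕜 := ℝ) j))

lemma hasFDerivAt_Af (y : E3) (j : Fin 3) (x : E3) : HasFDerivAt (Af y j) (CA j) x := by
  have h1 : HasFDerivAt (fun x : E3 => 2 * (x j - y j)) ((2:ℝ) • (EuclideanSpace.proj (𝕜 := ℝ) j)) x := by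
    exact ((EuclideanSpace.proj (𝕜 := ℝ) j).hasFDerivAt.sub_const (y j)).const_mul 2
  exact (Complex.ofRealCLM.hasFDerivAt).comp x h1

lemma CA_apply (j m : Fin 3) : CA j (EuclideanSpace.single m 1) = 2 * dlt j m := by
  simp [CA, EuclideanSpace.single_apply, dlt]
  by_cases h : j = m <;> simp [h, eq_comm]

/-- The first, second and third pd-levels. -/
def P1 (κ : ℝ) (y : E3) (j : Fin 3) (x : E3) : ℂ := Af y j x * f1 κ (qf y x)

def P2 (κ : ℝ) (y : E3) (j l : Fin 3) (x : E3) : ℂ :=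
  Af y j x * Af y l x * f2 κ (qf y x) + dlt j l * (2 * f1 κ (qf y x))

def P3 (κ : ℝ) (y : E3) (j l m : Fin 3) (x : E3) : ℂ :=
  Af y j x * Af y l x * Af y m x * f3 κ (qf y x)
    + (dlt l m * (2 * Af y j x) + dlt j m * (2 * Af y l x) + dlt j l * (2 * Af y m x))
        * f2 κ (qf y x)

/-- fderiv chain helper: `f_k ∘ qf`. -/
lemma hasFDerivAt_fqf {κ : ℝ} {y x : E3} (hxy : x ≠ y) (fa fb : ℝ → ℝ → ℂ)
    (hD : ∀ {t : ℝ}, 0 < t → HasDerivAt (fa κ) (fb κ t) t) :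
    HasFDerivAt (fun z => fa κ (qf y z))
      ((ContinuousLinearMap.smulRight (1 : ℝ →L[ℝ] ℝ) (fb κ (qf y x))).comp (Lq y x)) x := by
  have ht := qf_pos hxy
  exact ((hD ht).hasFDerivAt).comp x (hasFDerivAt_qf y x)

lemma pd_helm {κ : ℝ} {y x : E3} (hxy : x ≠ y) (j : Fin 3) :
    pd j (helmG κ y) x = P1 κ y j x := by
  have hfun : helmG κ y = fun z => f0 κ (qf y z) := funext (helmG_eq κ y)
  have h := hasFDerivAt_fqf (κ := κ) hxy f0 f1 (fun ht => hf0 ht)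
  rw [pd, hfun, h.fderiv]
  simp only [ContinuousLinearMap.coe_comp', Function.comp_apply,
    ContinuousLinearMap.smulRight_apply, ContinuousLinearMap.one_apply, Lq_apply]
  rw [Complex.real_smul, P1, Af]

lemma hasFDerivAt_P1 {κ : ℝ} {y x : E3} (hxy : x ≠ y) (j : Fin 3) :
    HasFDerivAt (P1 κ y j)
      (Af y j x • ((ContinuousLinearMap.smulRight (1 : ℝ →L[ℝ] ℝ) (f2 κ (qf y x))).comp (Lq y x))
        + f1 κ (qf y x) • CA j) x :=
  (hasFDerivAt_Af y j x).mul (hasFDerivAt_fqf (κ := κ) hxy f1 f2 (fun ht => hf1 ht))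

lemma pd_P1 {κ : ℝ} {y x : E3} (hxy : x ≠ y) (j l : Fin 3) :
    pd l (P1 κ y j) x = P2 κ y j l x := by
  have h := hasFDerivAt_P1 (κ := κ) hxy j
  rw [pd, h.fderiv]
  simp only [ContinuousLinearMap.add_apply, ContinuousLinearMap.coe_smul', Pi.smul_apply,
    ContinuousLinearMap.coe_comp', Function.comp_apply,
    ContinuousLinearMap.smulRight_apply, ContinuousLinearMap.one_apply, Lq_apply, CA_apply]
  simp only [P2, Af, Complex.real_smul, smul_eq_mul]
  push_cast
  ring

lemma hasFDerivAt_P2 {κ : ℝ} {y x : E3} (hxy : x ≠ y) (j l : Fin 3) :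
    HasFDerivAt (P2 κ y j l)
      ((Af y j x * Af y l x) •
          ((ContinuousLinearMap.smulRight (1 : ℝ →L[ℝ] ℝ) (f3 κ (qf y x))).comp (Lq y x))
        + f2 κ (qf y x) • (Af y j x • CA l + Af y l x • CA j)
        + dlt j l • ((2:ℂ) •
            ((ContinuousLinearMap.smulRight (1 : ℝ →L[ℝ] ℝ) (f2 κ (qf y x))).comp (Lq y x)))) x := by
  have h1 := ((hasFDerivAt_Af y j x).mul (hasFDerivAt_Af y l x)).mul
    (hasFDerivAt_fqf (κ := κ) hxy f2 f3 (fun ht => hf2 ht))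
  have h2 := ((hasFDerivAt_fqf (κ := κ) hxy f1 f2 (fun ht => hf1 ht)).const_mul (2:ℂ)).const_mul (dlt j l)
  have := h1.add h2
  exact this

lemma pd_P2 {κ : ℝ} {y x : E3} (hxy : x ≠ y) (j l m : Fin 3) :
    pd m (P2 κ y j l) x = P3 κ y j l m x := by
  have h := hasFDerivAt_P2 (κ := κ) hxy j l
  rw [pd, h.fderiv]
  simp only [ContinuousLinearMap.add_apply, ContinuousLinearMap.coe_smul', Pi.smul_apply,
    ContinuousLinearMap.coe_comp', Function.comp_apply,
    ContinuousLinearMap.smulRight_apply, ContinuousLinearMap.one_apply, Lq_apply, CA_apply]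
  simp only [P3, Af, Complex.real_smul, smul_eq_mul]
  push_cast
  ring

lemma pd_pd_helm {κ : ℝ} {y x : E3} (hxy : x ≠ y) (j l : Fin 3) :
    pd l (pd j (helmG κ y)) x = P2 κ y j l x := by
  have hmem : {z : E3 | z ≠ y} ∈ nhds x := (isOpen_ne).mem_nhds hxy
  have hev : pd j (helmG κ y) =ᶠ[nhds x] P1 κ y j :=
    Filter.eventuallyEq_of_mem hmem (fun z hz => pd_helm hz j)
  rw [pd, hev.fderiv_eq, ← pd, pd_P1 hxy j l]

lemma pd_final {κ : ℝ} (c : ℂ) {y x : E3} (hxy : x ≠ y) (j l m : Fin 3) :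
    pd m (fun z => c * pd l (pd j (helmG κ y)) z) x = c * P3 κ y j l m x := by
  have hmem : {z : E3 | z ≠ y} ∈ nhds x := (isOpen_ne).mem_nhds hxy
  have hev : (fun z => c * pd l (pd j (helmG κ y)) z) =ᶠ[nhds x] (fun z => c * P2 κ y j l z) :=
    Filter.eventuallyEq_of_mem hmem (fun z hz => by rw [pd_pd_helm hz j l])
  have h := (hasFDerivAt_P2 (κ := κ) hxy j l).const_mul c
  have hval := pd_P2 (κ := κ) hxy j l m
  rw [pd, (hasFDerivAt_P2 (κ := κ) hxy j l).fderiv] at hval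
  rw [pd, hev.fderiv_eq, h.fderiv, ContinuousLinearMap.smul_apply, hval, smul_eq_mul]

set_option maxHeartbeats 1000000 in
/-- The Kronecker delta as a real number. -/
def kd (j l : Fin 3) : ℝ := if j = l then 1 else 0

set_option maxHeartbeats 1000000 in
lemma key_ident (u : Fin 3 → ℝ) :
    ∑ j, ∑ l, ∑ m, (-15*u j*u l*u m
        + 3*(kd l m*u j + kd j m*u l + kd j l*u m)*(u 0^2+u 1^2+u 2^2))^2
      = 90*(u 0^2+u 1^2+u 2^2)^3 := by
  have h01 : kd 0 1 = 0 := by simp [kd]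
  have h02 : kd 0 2 = 0 := by simp [kd]
  have h10 : kd 1 0 = 0 := by simp [kd]
  have h12 : kd 1 2 = 0 := by simp [kd]
  have h20 : kd 2 0 = 0 := by simp [kd]
  have h21 : kd 2 1 = 0 := by simp [kd]
  have h00 : kd 0 0 = 1 := by simp [kd]
  have h11 : kd 1 1 = 1 := by simp [kd]
  have h22 : kd 2 2 = 1 := by simp [kd]
  simp only [Fin.sum_univ_three, h01, h02, h10, h12, h20, h21, h00, h11, h22]
  ring

lemma lower_sq (z : ℂ) (T : ℝ) : T^2/2 - ‖z - (T:ℂ)‖^2 ≤ ‖z‖^2 := by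
  have h1 : ‖(T:ℂ)‖ ≤ ‖z‖ + ‖z - (T:ℂ)‖ := by
    have := norm_sub_le z (z - (T:ℂ))
    simpa using this
  have h1' : |T| ≤ ‖z‖ + ‖z - (T:ℂ)‖ := by
    simpa [Complex.norm_real, Real.norm_eq_abs] using h1
  have h2 : |T|^2 ≤ (‖z‖ + ‖z - (T:ℂ)‖)^2 := pow_le_pow_left₀ (abs_nonneg T) h1' 2
  rw [_root_.sq_abs] at h2
  nlinarith [sq_nonneg (‖z‖ - ‖z - (T:ℂ)‖)]

lemma norm_exp_I_mul (κ r : ℝ) : ‖cexp (I * κ * r)‖ = 1 := by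
  rw [Complex.norm_exp]
  simp [Complex.mul_re]

def NN3 (κ r : ℝ) : ℂ := -15 + 15*I*κ*r + 6*κ^2*r^2 - I*κ^3*r^3
def NN2 (κ r : ℝ) : ℂ := 3 - 3*I*κ*r - κ^2*r^2

/-- The inner (normalized) part of `P3`. -/
def ZZ (κ : ℝ) (y : E3) (j l m : Fin 3) (x : E3) : ℂ :=
  NN3 κ ‖x - y‖ * (((x j - y j)*(x l - y l)*(x m - y m) / ‖x - y‖^7 : ℝ) : ℂ)
    + NN2 κ ‖x - y‖ * (((kd l m*(x j - y j) + kd j m*(x l - y l) + kd j l*(x m - y m))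
        / ‖x - y‖^5 : ℝ) : ℂ)

lemma dlt_eq_kd (j l : Fin 3) : dlt j l = ((kd j l : ℝ) : ℂ) := by
  simp [dlt, kd, apply_ite Complex.ofReal]

set_option maxHeartbeats 2000000 in
lemma P3_eq_ZZ {κ : ℝ} {y x : E3} (hxy : x ≠ y) (j l m : Fin 3) :
    P3 κ y j l m x = cexp (I * κ * ‖x - y‖) / (4 * Real.pi) * ZZ κ y j l m x := by
  have hr : (0:ℝ) < ‖x - y‖ := by rw [norm_pos_iff]; exact sub_ne_zero.mpr hxy
  have hrC : ((‖x - y‖ : ℝ) : ℂ) ≠ 0 := Complex.ofReal_ne_zero.mpr (ne_of_gt hr)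
  have hsq : Real.sqrt (qf y x) = ‖x - y‖ := (norm_eq_sqrt_qf y x).symm
  rw [P3, f3, f2, Φ₃, Φ₂, hsq, ZZ, NN3, NN2, Af, Af, Af, dlt_eq_kd, dlt_eq_kd, dlt_eq_kd]
  push_cast
  field_simp [hrC, pi_neC]
  ring

def Mv (κ : ℝ) : ℝ := 24* |κ| + 9*κ^2 + |κ|^3

lemma Mv_nonneg (κ : ℝ) : 0 ≤ Mv κ := by
  have := abs_nonneg κ
  have := sq_nonneg κ
  have : (0:ℝ) ≤ |κ|^3 := by positivity
  unfold Mv; positivity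

set_option maxHeartbeats 2000000 in
lemma ZZ_sub_T {κ : ℝ} {y x : E3} (hxy : x ≠ y) (j l m : Fin 3) :
    ZZ κ y j l m x
      - (((-15*(x j - y j)*(x l - y l)*(x m - y m)
          + 3*(kd l m*(x j - y j) + kd j m*(x l - y l) + kd j l*(x m - y m))*‖x - y‖^2)
            / ‖x - y‖^7 : ℝ) : ℂ)
      = (15*I*κ*‖x - y‖ + 6*κ^2*‖x - y‖^2 - I*κ^3*‖x - y‖^3)
          * (((x j - y j)*(x l - y l)*(x m - y m) / ‖x - y‖^7 : ℝ) : ℂ)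
        + (-3*I*κ*‖x - y‖ - κ^2*‖x - y‖^2)
          * (((kd l m*(x j - y j) + kd j m*(x l - y l) + kd j l*(x m - y m)) / ‖x - y‖^5 : ℝ) : ℂ) := by
  have hr : (0:ℝ) < ‖x - y‖ := by rw [norm_pos_iff]; exact sub_ne_zero.mpr hxy
  have hrC : ((‖x - y‖ : ℝ) : ℂ) ≠ 0 := Complex.ofReal_ne_zero.mpr (ne_of_gt hr)
  rw [ZZ, NN3, NN2]
  push_cast
  field_simp [hrC]
  ring

lemma norm_n3_le (κ r : ℝ) (hr : 0 < r) :
    ‖(15*I*κ*r + 6*κ^2*r^2 - I*κ^3*r^3 : ℂ)‖ ≤ 15* |κ| *r + 6*κ^2*r^2 + |κ|^3*r^3 := by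
  have h1 : ‖(15*I*κ*r + 6*κ^2*r^2 - I*κ^3*r^3 : ℂ)‖
      ≤ ‖(15*I*κ*r : ℂ)‖ + ‖(6*κ^2*r^2 : ℂ)‖ + ‖(I*κ^3*r^3 : ℂ)‖ := by
    calc ‖(15*I*κ*r + 6*κ^2*r^2 - I*κ^3*r^3 : ℂ)‖
        ≤ ‖(15*I*κ*r + 6*κ^2*r^2 : ℂ)‖ + ‖(I*κ^3*r^3 : ℂ)‖ := norm_sub_le _ _
      _ ≤ ‖(15*I*κ*r : ℂ)‖ + ‖(6*κ^2*r^2 : ℂ)‖ + ‖(I*κ^3*r^3 : ℂ)‖ := by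
          have := norm_add_le (15*I*κ*r : ℂ) (6*κ^2*r^2 : ℂ)
          linarith
  have e1 : ‖(15*I*κ*r : ℂ)‖ = 15* |κ| *r := by
    simp [norm_mul, Complex.norm_real, Real.norm_eq_abs, abs_of_pos hr]
  have e2 : ‖(6*κ^2*r^2 : ℂ)‖ = 6*κ^2*r^2 := by
    have : ((6:ℂ)*κ^2*r^2) = (((6*κ^2*r^2 : ℝ)) : ℂ) := by push_cast; ring
    rw [this, Complex.norm_real, Real.norm_eq_abs, _root_.abs_of_nonneg (by positivity)]
  have e3 : ‖(I*κ^3*r^3 : ℂ)‖ = |κ|^3*r^3 := by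
    simp [norm_mul, Complex.norm_real, Real.norm_eq_abs, _root_.abs_pow, abs_of_pos hr]
  rw [e1, e2, e3] at h1
  linarith
lemma norm_n2_le (κ r : ℝ) (hr : 0 < r) :
    ‖(-3*I*κ*r - κ^2*r^2 : ℂ)‖ ≤ 3* |κ| *r + κ^2*r^2 := by
  have h1 : ‖(-3*I*κ*r - κ^2*r^2 : ℂ)‖ ≤ ‖(-3*I*κ*r : ℂ)‖ + ‖(κ^2*r^2 : ℂ)‖ := norm_sub_le _ _
  have e1 : ‖(-3*I*κ*r : ℂ)‖ = 3* |κ| *r := by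
    simp [norm_mul, Complex.norm_real, Real.norm_eq_abs, abs_of_pos hr]
  have e2 : ‖((κ:ℂ)^2*r^2 : ℂ)‖ = κ^2*r^2 := by
    have : ((κ:ℂ)^2*r^2) = (((κ^2*r^2 : ℝ)) : ℂ) := by push_cast; ring
    rw [this, Complex.norm_real, Real.norm_eq_abs, _root_.abs_of_nonneg (by positivity)]
  rw [e1, e2] at h1
  linarith

lemma abs_le_of_sq_le {a b : ℝ} (hb : 0 ≤ b) (h : a^2 ≤ b^2) : |a| ≤ b := by
  have := Real.sqrt_le_sqrt h
  rwa [Real.sqrt_sq_eq_abs, Real.sqrt_sq hb] at this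

lemma sq_sum_eq (y x : E3) :
    (x 0 - y 0)^2 + (x 1 - y 1)^2 + (x 2 - y 2)^2 = ‖x - y‖^2 := by
  have h1 : ‖x - y‖^2 = qf y x := by
    rw [norm_eq_sqrt_qf, Real.sq_sqrt]
    have : ∀ i, 0 ≤ (x i - y i)^2 := fun i => sq_nonneg _
    exact Finset.sum_nonneg fun i _ => this i
  rw [h1, qf, Fin.sum_univ_three]

lemma abs_coord_le (y x : E3) (i : Fin 3) : |x i - y i| ≤ ‖x - y‖ := by
  refine abs_le_of_sq_le (norm_nonneg _) ?_
  have h := Finset.single_le_sum (f := fun i => (x i - y i)^2)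
    (fun i _ => sq_nonneg _) (Finset.mem_univ i)
  have h2 : ‖x - y‖^2 = qf y x := by
    rw [norm_eq_sqrt_qf, Real.sq_sqrt]
    exact Finset.sum_nonneg fun i _ => sq_nonneg _
  rw [h2]
  exact h

lemma abs_kd_mul_le {j l : Fin 3} {a r : ℝ} (h : |a| ≤ r) : |kd j l * a| ≤ r := by
  have hr0 : 0 ≤ r := le_trans (abs_nonneg a) h
  unfold kd
  split_ifs
  · simpa using h
  · simpa using hr0

lemma ZZ_lower {κ : ℝ} {y x : E3} (hxy : x ≠ y) (hr1 : ‖x - y‖ ≤ 1) (j l m : Fin 3) :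
    ((-15*(x j - y j)*(x l - y l)*(x m - y m)
        + 3*(kd l m*(x j - y j) + kd j m*(x l - y l) + kd j l*(x m - y m))*‖x - y‖^2)
          / ‖x - y‖^7)^2 / 2
      - (Mv κ)^2/‖x - y‖^6 ≤ ‖ZZ κ y j l m x‖^2 := by
  set r := ‖x - y‖ with hrdef
  have hr : (0:ℝ) < r := by rw [hrdef, norm_pos_iff]; exact sub_ne_zero.mpr hxy
  have hu : ∀ i, |x i - y i| ≤ r := abs_coord_le y x
  -- bound on the norm of the remainder
  have hB : ‖(((x j - y j)*(x l - y l)*(x m - y m) / r^7 : ℝ) : ℂ)‖ ≤ r^3/r^7 := by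
    rw [Complex.norm_real, Real.norm_eq_abs, abs_div, _root_.abs_of_nonneg (by positivity : (0:ℝ) ≤ r^7)]
    apply div_le_div_of_nonneg_right ?_ (by positivity)
    rw [abs_mul, abs_mul]
    calc |x j - y j| * |x l - y l| * |x m - y m| ≤ r * r * r := by
          apply mul_le_mul (mul_le_mul (hu j) (hu l) (abs_nonneg _) hr.le) (hu m) (abs_nonneg _)
          positivity
      _ = r^3 := by ring
  have hD : ‖((kd l m*(x j - y j) + kd j m*(x l - y l) + kd j l*(x m - y m)) / r^5 : ℝ)‖
      ≤ (3*r)/r^5 := by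
    rw [Real.norm_eq_abs, abs_div, _root_.abs_of_nonneg (by positivity : (0:ℝ) ≤ r^5)]
    apply div_le_div_of_nonneg_right ?_ (by positivity)
    calc |kd l m*(x j - y j) + kd j m*(x l - y l) + kd j l*(x m - y m)|
        ≤ |kd l m*(x j - y j) + kd j m*(x l - y l)| + |kd j l*(x m - y m)| := abs_add_le _ _
      _ ≤ |kd l m*(x j - y j)| + |kd j m*(x l - y l)| + |kd j l*(x m - y m)| := by
          have := abs_add_le (kd l m*(x j - y j)) (kd j m*(x l - y l)); linarith
      _ ≤ r + r + r := by
          have b1 := abs_kd_mul_le (j := l) (l := m) (hu j)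
          have b2 := abs_kd_mul_le (j := j) (l := m) (hu l)
          have b3 := abs_kd_mul_le (j := j) (l := l) (hu m)
          linarith
      _ = 3*r := by ring
  have hZT : ‖ZZ κ y j l m x
      - (((-15*(x j - y j)*(x l - y l)*(x m - y m)
          + 3*(kd l m*(x j - y j) + kd j m*(x l - y l) + kd j l*(x m - y m))*r^2)
            / r^7 : ℝ) : ℂ)‖ ≤ Mv κ / r^3 := by
    rw [ZZ_sub_T hxy j l m]
    have h1 := norm_add_le
      ((15*I*κ*r + 6*κ^2*r^2 - I*κ^3*r^3 : ℂ)
        * (((x j - y j)*(x l - y l)*(x m - y m) / r^7 : ℝ) : ℂ))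
      ((-3*I*κ*r - κ^2*r^2 : ℂ)
        * (((kd l m*(x j - y j) + kd j m*(x l - y l) + kd j l*(x m - y m)) / r^5 : ℝ) : ℂ))
    rw [norm_mul, norm_mul] at h1
    have hD' : ‖(((kd l m*(x j - y j) + kd j m*(x l - y l) + kd j l*(x m - y m)) / r^5 : ℝ) : ℂ)‖
        ≤ (3*r)/r^5 := by rw [Complex.norm_real]; exact hD
    have h2 : ‖(15*I*κ*r + 6*κ^2*r^2 - I*κ^3*r^3 : ℂ)‖
        * ‖(((x j - y j)*(x l - y l)*(x m - y m) / r^7 : ℝ) : ℂ)‖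
        ≤ (15*|κ| * r + 6*κ^2*r^2 + |κ|^3*r^3) * (r^3/r^7) :=
      mul_le_mul (norm_n3_le κ r hr) hB (norm_nonneg _) (by positivity)
    have h3 : ‖(-3*I*κ*r - κ^2*r^2 : ℂ)‖
        * ‖(((kd l m*(x j - y j) + kd j m*(x l - y l) + kd j l*(x m - y m)) / r^5 : ℝ) : ℂ)‖
        ≤ (3*|κ| * r + κ^2*r^2) * ((3*r)/r^5) :=
      mul_le_mul (norm_n2_le κ r hr) hD' (norm_nonneg _) (by positivity)
    have h4 : (15*|κ| * r + 6*κ^2*r^2 + |κ|^3*r^3) * (r^3/r^7)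
        + (3*|κ| * r + κ^2*r^2) * ((3*r)/r^5)
        = (15*|κ| + 6*κ^2*r + |κ|^3*r^2 + 9*|κ| + 3*κ^2*r)/r^3 := by
      field_simp
      ring
    have h5 : (15*|κ| + 6*κ^2*r + |κ|^3*r^2 + 9*|κ| + 3*κ^2*r)/r^3 ≤ Mv κ / r^3 := by
      apply div_le_div_of_nonneg_right ?_ (by positivity)
      unfold Mv
      have ha : (0:ℝ) ≤ κ^2*(1-r) := mul_nonneg (sq_nonneg κ) (by linarith)
      have hb : (0:ℝ) ≤ |κ|^3*((1-r)*(1+r)) :=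
        mul_nonneg (pow_nonneg (abs_nonneg κ) 3)
          (mul_nonneg (by linarith) (by linarith))
      nlinarith [ha, hb]
    linarith
  have hsq : ‖ZZ κ y j l m x
      - (((-15*(x j - y j)*(x l - y l)*(x m - y m)
          + 3*(kd l m*(x j - y j) + kd j m*(x l - y l) + kd j l*(x m - y m))*r^2)
            / r^7 : ℝ) : ℂ)‖^2 ≤ (Mv κ)^2/r^6 := by
    have := pow_le_pow_left₀ (norm_nonneg _) hZT 2
    calc ‖_ - _‖^2 ≤ (Mv κ / r^3)^2 := this
      _ = (Mv κ)^2/r^6 := by rw [div_pow, ← pow_mul]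
  have := lower_sq (ZZ κ y j l m x)
    ((-15*(x j - y j)*(x l - y l)*(x m - y m)
        + 3*(kd l m*(x j - y j) + kd j m*(x l - y l) + kd j l*(x m - y m))*r^2) / r^7)
  linarith

lemma pointwise_ZZ {κ : ℝ} {y x : E3} (hxy : x ≠ y) :
    45/‖x - y‖^8 - (45 + 27*(Mv κ)^2)/‖x - y‖^6
      ≤ ∑ j : Fin 3, ∑ l : Fin 3, ∑ m : Fin 3, ‖ZZ κ y j l m x‖^2 := by
  have hr : (0:ℝ) < ‖x - y‖ := by rw [norm_pos_iff]; exact sub_ne_zero.mpr hxy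
  have hRHS : (0:ℝ) ≤ ∑ j : Fin 3, ∑ l : Fin 3, ∑ m : Fin 3, ‖ZZ κ y j l m x‖^2 := by
    refine Finset.sum_nonneg fun j _ => Finset.sum_nonneg fun l _ => Finset.sum_nonneg fun m _ => ?_
    positivity
  rcases le_or_gt (‖x - y‖) 1 with hr1 | hr1
  · -- small r case
    have h1 : ∑ j : Fin 3, ∑ l : Fin 3, ∑ m : Fin 3,
        (((-15*(x j - y j)*(x l - y l)*(x m - y m)
          + 3*(kd l m*(x j - y j) + kd j m*(x l - y l) + kd j l*(x m - y m))*‖x - y‖^2)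
            / ‖x - y‖^7)^2 / 2 - (Mv κ)^2/‖x - y‖^6)
        ≤ ∑ j : Fin 3, ∑ l : Fin 3, ∑ m : Fin 3, ‖ZZ κ y j l m x‖^2 := by
      refine Finset.sum_le_sum fun j _ => Finset.sum_le_sum fun l _ => Finset.sum_le_sum fun m _ => ?_
      exact ZZ_lower hxy hr1 j l m
    have hkey := key_ident (fun i => x i - y i)
    simp only [] at hkey
    rw [sq_sum_eq y x] at hkey
    have hTsum : ∑ j : Fin 3, ∑ l : Fin 3, ∑ m : Fin 3,
        ((-15*(x j - y j)*(x l - y l)*(x m - y m)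
          + 3*(kd l m*(x j - y j) + kd j m*(x l - y l) + kd j l*(x m - y m))*‖x - y‖^2)
            / ‖x - y‖^7)^2 = 90/‖x - y‖^8 := by
      have e1 : ∑ j : Fin 3, ∑ l : Fin 3, ∑ m : Fin 3,
          ((-15*(x j - y j)*(x l - y l)*(x m - y m)
            + 3*(kd l m*(x j - y j) + kd j m*(x l - y l) + kd j l*(x m - y m))*‖x - y‖^2)
              / ‖x - y‖^7)^2
          = (∑ j : Fin 3, ∑ l : Fin 3, ∑ m : Fin 3,
            (-15*(x j - y j)*(x l - y l)*(x m - y m)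
              + 3*(kd l m*(x j - y j) + kd j m*(x l - y l) + kd j l*(x m - y m))*‖x - y‖^2)^2)
              / ‖x - y‖^14 := by
        simp only [div_pow, ← Finset.sum_div, ← pow_mul]
      rw [e1, hkey, div_eq_div_iff (by positivity) (by positivity)]
      ring
    have h2 : ∑ j : Fin 3, ∑ l : Fin 3, ∑ m : Fin 3,
        (((-15*(x j - y j)*(x l - y l)*(x m - y m)
          + 3*(kd l m*(x j - y j) + kd j m*(x l - y l) + kd j l*(x m - y m))*‖x - y‖^2)
            / ‖x - y‖^7)^2 / 2 - (Mv κ)^2/‖x - y‖^6)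
        = (∑ j : Fin 3, ∑ l : Fin 3, ∑ m : Fin 3,
            ((-15*(x j - y j)*(x l - y l)*(x m - y m)
              + 3*(kd l m*(x j - y j) + kd j m*(x l - y l) + kd j l*(x m - y m))*‖x - y‖^2)
                / ‖x - y‖^7)^2) / 2 - 27*((Mv κ)^2/‖x - y‖^6) := by
      simp only [Finset.sum_sub_distrib, ← Finset.sum_div, Finset.sum_const,
        Finset.card_univ, Fintype.card_fin, nsmul_eq_mul]
      push_cast
      ring
    rw [h2, hTsum] at h1
    have hadd : (45 + 27*(Mv κ)^2)/‖x - y‖^6 = 45/‖x - y‖^6 + 27*((Mv κ)^2/‖x - y‖^6) := by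
      field_simp
    have h45 : (0:ℝ) ≤ 45/‖x - y‖^6 := by positivity
    have h90 : 90/‖x - y‖^8/2 = 45/‖x - y‖^8 := by ring
    linarith
  · -- large r case
    have h6 : ‖x - y‖^6 ≤ ‖x - y‖^8 := pow_le_pow_right₀ hr1.le (by norm_num)
    have h1 : 45/‖x - y‖^8 ≤ 45/‖x - y‖^6 :=
      div_le_div_of_nonneg_left (by norm_num) (by positivity) h6
    have h2 : 45/‖x - y‖^6 ≤ (45 + 27*(Mv κ)^2)/‖x - y‖^6 := by
      apply div_le_div_of_nonneg_right ?_ (by positivity)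
      nlinarith [sq_nonneg (Mv κ)]
    linarith

lemma cont_normsub (y : E3) : Continuous fun x : E3 => ‖x - y‖ :=
  (continuous_id.sub continuous_const).norm

lemma cont_coord (j : Fin 3) : Continuous fun x : E3 => x j :=
  (EuclideanSpace.proj (𝕜 := ℝ) j).continuous

lemma cont_Af (y : E3) (j : Fin 3) : Continuous (Af y j) := by
  unfold Af
  exact Complex.continuous_ofReal.comp (continuous_const.mul ((cont_coord j).sub continuous_const))

lemma contOn_Phi (κ : ℝ) (n : ℕ) (cden : ℝ) (p : ℝ → ℂ) (hp : Continuous p) :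
    ContinuousOn (fun r : ℝ => cexp (I * κ * r) * p r / (cden * Real.pi * (r:ℂ) ^ n))
      {r : ℝ | r ≠ 0 ∧ cden ≠ 0} := by
  apply ContinuousOn.div
  · exact ((Complex.continuous_exp.comp
      ((continuous_const.mul Complex.continuous_ofReal))).mul hp).continuousOn
  · exact (continuous_const.mul (Complex.continuous_ofReal.pow n)).continuousOn
  · intro r hr
    simp only [Set.mem_setOf_eq] at hr
    simp [pi_neC, Complex.ofReal_ne_zero.mpr hr.1, hr.2, Real.pi_ne_zero]

lemma contOn_f2 (κ : ℝ) (y : E3) :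
    ContinuousOn (fun x => f2 κ (qf y x)) {x : E3 | x ≠ y} := by
  have he : (fun x => f2 κ (qf y x)) = fun x : E3 => Φ₂ κ ‖x - y‖ :=
    funext fun x => by rw [f2, ← norm_eq_sqrt_qf]
  rw [he]
  have h1 : ContinuousOn (Φ₂ κ) {r : ℝ | r ≠ 0 ∧ (16:ℝ) ≠ 0} := by
    have h2 := contOn_Phi κ 5 16 (fun r : ℝ => (3 - 3*I*κ*r - κ^2*(r:ℂ)^2))
      (by continuity)
    have hfun : (Φ₂ κ) = fun r : ℝ =>
        cexp (I * κ * r) * (3 - 3*I*κ*r - κ^2*(r:ℂ)^2) / ((16:ℝ) * Real.pi * (r:ℂ)^5) := by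
      funext r
      rw [Φ₂]
      norm_cast
    rw [hfun]
    exact h2
  refine h1.comp (cont_normsub y).continuousOn fun x hx => ?_
  have : x ≠ y := hx
  constructor
  · simpa [sub_eq_zero] using this
  · norm_num

lemma contOn_f3 (κ : ℝ) (y : E3) :
    ContinuousOn (fun x => f3 κ (qf y x)) {x : E3 | x ≠ y} := by
  have he : (fun x => f3 κ (qf y x)) = fun x : E3 => Φ₃ κ ‖x - y‖ :=
    funext fun x => by rw [f3, ← norm_eq_sqrt_qf]
  rw [he]
  have h1 : ContinuousOn (Φ₃ κ) {r : ℝ | r ≠ 0 ∧ (32:ℝ) ≠ 0} := by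
    have h2 := contOn_Phi κ 7 32
      (fun r : ℝ => (-15 + 15*I*κ*r + 6*κ^2*(r:ℂ)^2 - I*κ^3*(r:ℂ)^3)) (by continuity)
    have hfun : (Φ₃ κ) = fun r : ℝ =>
        cexp (I * κ * r) * (-15 + 15*I*κ*r + 6*κ^2*(r:ℂ)^2 - I*κ^3*(r:ℂ)^3)
          / ((32:ℝ) * Real.pi * (r:ℂ)^7) := by
      funext r
      rw [Φ₃]
      norm_cast
    rw [hfun]
    exact h2
  refine h1.comp (cont_normsub y).continuousOn fun x hx => ?_
  have : x ≠ y := hx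
  constructor
  · simpa [sub_eq_zero] using this
  · norm_num

lemma contOn_P3 (κ : ℝ) (y : E3) (j l m : Fin 3) :
    ContinuousOn (P3 κ y j l m) {x : E3 | x ≠ y} := by
  unfold P3
  apply ContinuousOn.add
  · exact ((((cont_Af y j).mul (cont_Af y l)).mul (cont_Af y m)).continuousOn).mul
      (contOn_f3 κ y)
  · apply ContinuousOn.mul ?_ (contOn_f2 κ y)
    apply Continuous.continuousOn
    exact ((continuous_const.mul (continuous_const.mul (cont_Af y j))).add
      (continuous_const.mul (continuous_const.mul (cont_Af y l)))).add
      (continuous_const.mul (continuous_const.mul (cont_Af y m)))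

lemma P3_norm_sq {κ : ℝ} {y x : E3} (hxy : x ≠ y) (j l m : Fin 3) :
    ‖P3 κ y j l m x‖^2 = ‖ZZ κ y j l m x‖^2 / (16*Real.pi^2) := by
  rw [P3_eq_ZZ hxy, norm_mul, norm_div, norm_exp_I_mul]
  have h4 : ‖((4:ℂ) * Real.pi)‖ = 4*Real.pi := by
    have he : ((4:ℂ)*Real.pi) = ((4*Real.pi : ℝ):ℂ) := by push_cast; ring
    rw [he, Complex.norm_real, Real.norm_eq_abs, _root_.abs_of_pos (by positivity)]
  rw [h4]
  field_simp
  ring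

/-- Lower bound for the summed `L²(D)` norms of the gradients of the columns `Φ_p^j`
of the `p`-part of the elastic fundamental tensor. -/
theorem gradient_L2_lower_bound_p_part (κ κp : ℝ) (hκ : κ ≠ 0) :
    ∃ C > (0 : ℝ), ∃ C' ≥ (0 : ℝ), ∀ D : Set E3, MeasurableSet D → Bornology.IsBounded D →
      ∀ y : E3, y ∉ closure D →
        C * (∫ x in D, 1 / ‖x - y‖ ^ 8) - C' * (∫ x in D, 1 / ‖x - y‖ ^ 6)
          ≤ ∑ j : Fin 3, ∫ x in D, ∑ l : Fin 3, ∑ m : Fin 3,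
              ‖pd m (fun z => -(1 / (κ : ℂ) ^ 2) * pd l (pd j (helmG κp y)) z) x‖ ^ 2 := by
  have hk4 : (0:ℝ) < κ^4 := by
    have h1 : (0:ℝ) < |κ| := abs_pos.mpr hκ
    calc (0:ℝ) < |κ|^4 := by positivity
      _ = κ^4 := by rw [← _root_.abs_pow, _root_.abs_of_nonneg (by positivity)]
  refine ⟨45/(16*Real.pi^2*κ^4), by positivity,
    (45+27*(Mv κp)^2)/(16*Real.pi^2*κ^4), by positivity, fun D hD hDb y hyD => ?_⟩
  set c : ℂ := -(1/(κ:ℂ)^2) with hcdef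
  have hsubC : D ⊆ closure D := subset_closure
  have hne : ∀ x ∈ closure D, x ≠ y := fun x hx h => hyD (h ▸ hx)
  have hKc : IsCompact (closure D) := hDb.isCompact_closure
  have hmono : closure D ⊆ {x : E3 | x ≠ y} := fun x hx => hne x hx
  -- norm of the constant
  have hnc : ‖c‖^2 = (κ^4)⁻¹ := by
    rw [hcdef, norm_neg, norm_div, norm_one, norm_pow, Complex.norm_real, Real.norm_eq_abs]
    rw [div_pow, one_pow, ← pow_mul]
    norm_num
    rw [← _root_.abs_pow, _root_.abs_of_nonneg (by positivity : (0:ℝ) ≤ κ^4)]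
  -- step 1 : rewrite the integrand using the explicit third derivative
  have hstep1 : ∀ j : Fin 3,
      (∫ x in D, ∑ l : Fin 3, ∑ m : Fin 3,
          ‖pd m (fun z => c * pd l (pd j (helmG κp y)) z) x‖^2)
        = ∫ x in D, ∑ l : Fin 3, ∑ m : Fin 3, ‖c * P3 κp y j l m x‖^2 := by
    intro j
    apply setIntegral_congr_fun hD
    intro x hx
    refine Finset.sum_congr rfl fun l _ => Finset.sum_congr rfl fun m _ => ?_
    rw [pd_final c (hne x (hsubC hx)) j l m]
  -- integrability of the right-hand side integrands
  have hcontG : ∀ j : Fin 3, ContinuousOn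
      (fun x => ∑ l : Fin 3, ∑ m : Fin 3, ‖c * P3 κp y j l m x‖^2) (closure D) := by
    intro j
    refine continuousOn_finset_sum _ fun l _ => continuousOn_finset_sum _ fun m _ => ?_
    exact ((continuousOn_const.mul ((contOn_P3 κp y j l m).mono hmono)).norm).pow 2
  have hintG : ∀ j : Fin 3, IntegrableOn
      (fun x => ∑ l : Fin 3, ∑ m : Fin 3, ‖c * P3 κp y j l m x‖^2) D volume :=
    fun j => ((hcontG j).integrableOn_compact hKc).mono_set hsubC
  -- integrability of the left-hand side integrands
  have hnorm_ne : ∀ x ∈ closure D, ‖x - y‖ ≠ 0 :=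
    fun x hx => norm_ne_zero_iff.mpr (sub_ne_zero.mpr (hne x hx))
  have hcontF1 : ContinuousOn (fun x : E3 => 1/‖x - y‖^8) (closure D) :=
    continuousOn_const.div (((cont_normsub y).pow 8).continuousOn)
      (fun x hx => pow_ne_zero _ (hnorm_ne x hx))
  have hcontF2 : ContinuousOn (fun x : E3 => 1/‖x - y‖^6) (closure D) :=
    continuousOn_const.div (((cont_normsub y).pow 6).continuousOn)
      (fun x hx => pow_ne_zero _ (hnorm_ne x hx))
  have hintF1 : IntegrableOn (fun x : E3 => 1/‖x - y‖^8) D volume :=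
    (hcontF1.integrableOn_compact hKc).mono_set hsubC
  have hintF2 : IntegrableOn (fun x : E3 => 1/‖x - y‖^6) D volume :=
    (hcontF2.integrableOn_compact hKc).mono_set hsubC
  -- pointwise lower bound
  have hpt : ∀ x ∈ D,
      45/(16*Real.pi^2*κ^4) * (1/‖x - y‖^8) - (45+27*(Mv κp)^2)/(16*Real.pi^2*κ^4) * (1/‖x - y‖^6)
        ≤ ∑ j : Fin 3, ∑ l : Fin 3, ∑ m : Fin 3, ‖c * P3 κp y j l m x‖^2 := by
    intro x hx
    have hxy : x ≠ y := hne x (hsubC hx)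
    have hr : (0:ℝ) < ‖x - y‖ := by rw [norm_pos_iff]; exact sub_ne_zero.mpr hxy
    have h1 := pointwise_ZZ (κ := κp) (y := y) (x := x) hxy
    have e1 : ∀ j l m : Fin 3, ‖c * P3 κp y j l m x‖^2
        = (κ^4)⁻¹ * (‖ZZ κp y j l m x‖^2 / (16*Real.pi^2)) := by
      intro j l m
      rw [norm_mul, mul_pow, hnc, P3_norm_sq hxy]
    have e2 : ∑ j : Fin 3, ∑ l : Fin 3, ∑ m : Fin 3, ‖c * P3 κp y j l m x‖^2
        = (κ^4)⁻¹ * ((∑ j : Fin 3, ∑ l : Fin 3, ∑ m : Fin 3, ‖ZZ κp y j l m x‖^2)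
            / (16*Real.pi^2)) := by
      simp only [e1, ← Finset.mul_sum, ← Finset.sum_div]
    rw [e2]
    have h2 : (κ^4)⁻¹ * ((45/‖x - y‖^8 - (45+27*(Mv κp)^2)/‖x - y‖^6) / (16*Real.pi^2))
        ≤ (κ^4)⁻¹ * ((∑ j : Fin 3, ∑ l : Fin 3, ∑ m : Fin 3, ‖ZZ κp y j l m x‖^2)
            / (16*Real.pi^2)) := by
      apply mul_le_mul_of_nonneg_left ?_ (by positivity)
      apply div_le_div_of_nonneg_right h1 (by positivity)
    refine le_trans (le_of_eq ?_) h2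
    field_simp
  -- assemble
  calc 45/(16*Real.pi^2*κ^4) * (∫ x in D, 1 / ‖x - y‖ ^ 8)
        - (45+27*(Mv κp)^2)/(16*Real.pi^2*κ^4) * (∫ x in D, 1 / ‖x - y‖ ^ 6)
      = ∫ x in D, (45/(16*Real.pi^2*κ^4) * (1/‖x - y‖^8)
          - (45+27*(Mv κp)^2)/(16*Real.pi^2*κ^4) * (1/‖x - y‖^6)) := by
        rw [integral_sub (hintF1.const_mul _) (hintF2.const_mul _),
          integral_const_mul, integral_const_mul]
    _ ≤ ∫ x in D, ∑ j : Fin 3, ∑ l : Fin 3, ∑ m : Fin 3, ‖c * P3 κp y j l m x‖^2 := by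
        apply setIntegral_mono_on ?_ ?_ hD hpt
        · exact (hintF1.const_mul _).sub (hintF2.const_mul _)
        · exact integrable_finset_sum _ fun j _ => hintG j
    _ = ∑ j : Fin 3, ∫ x in D, ∑ l : Fin 3, ∑ m : Fin 3, ‖c * P3 κp y j l m x‖^2 :=
        integral_finset_sum _ fun j _ => hintG j
    _ = ∑ j : Fin 3, ∫ x in D, ∑ l : Fin 3, ∑ m : Fin 3,
          ‖pd m (fun z => c * pd l (pd j (helmG κp y)) z) x‖^2 :=
        Finset.sum_congr rfl fun j _ => (hstep1 j).symm


end
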